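/- arXiv:2009.12295 — 6 statements merged into one kernel-verified Lean document; each statement's English description precedes it below -/
import Mathlib

section
/- For 1/2 < α < 1 and any positive integer n, (n+1) · Σ_{k=1}^{n} ((1 − k/(n+1))^α − (1 − (k+1)/(n+1))^α)² ≤ α²/(2α−1). -/
open scoped BigOperators
open MeasureTheory intervalIntegral

lemma key_ineq (α : ℝ) (hα1 : 1 / 2 < α) (hα2 : α < 1) (x : ℝ) (hx : 0 ≤ x) :
    ((x + 1) ^ α - x ^ α) ^ 2 ≤ α ^ 2 / (2 * α - 1) * ((x + 1) ^ (2 * α - 1) - x ^ (2 * α - 1)) := by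
  have hα0 : 0 < α := by linarith
  have h2α : 0 < 2 * α - 1 := by linarith
  set s : Set ℝ := Set.Ioc x (x + 1) with hs
  set μ : Measure ℝ := volume.restrict s with hμ
  have hab : x ≤ x + 1 := by linarith
  -- the two integrands
  set f : ℝ → ℝ := fun t => t ^ (α - 1) with hf
  set g : ℝ → ℝ := fun t => t ^ (2 * α - 2) with hg
  have hfint : IntegrableOn f s := by
    rw [← intervalIntegrable_iff_integrableOn_Ioc_of_le hab]
    exact intervalIntegral.intervalIntegrable_rpow' (by linarith)
  have hgint : IntegrableOn g s := by
    rw [← intervalIntegrable_iff_integrableOn_Ioc_of_le hab]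
    exact intervalIntegral.intervalIntegrable_rpow' (by linarith)
  have hae : ∀ᵐ t ∂μ, t ∈ s := ae_restrict_mem measurableSet_Ioc
  have hsq : ∀ᵐ t ∂μ, f t ^ 2 = g t := by
    filter_upwards [hae] with t ht
    have ht0 : 0 ≤ t := le_trans hx ht.1.le
    rw [hf, hg]
    simp only
    rw [sq, ← Real.rpow_add' ht0 (by linarith)]
    ring_nf
  have hfnn : 0 ≤ᵐ[μ] f := by
    filter_upwards [hae] with t ht
    exact Real.rpow_nonneg (le_trans hx ht.1.le) _
  have hmemf : MemLp f 2 μ := by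
    rw [memLp_two_iff_integrable_sq hfint.aestronglyMeasurable]
    exact hgint.congr (hsq.mono fun t h => h.symm)
  have hμfin : IsFiniteMeasure μ := by
    constructor
    rw [hμ, Measure.restrict_apply_univ, hs, Real.volume_Ioc]
    exact ENNReal.ofReal_lt_top
  have hconj : Real.HolderConjugate 2 2 := ⟨by norm_num, by norm_num, by norm_num⟩
  have hofReal : (ENNReal.ofReal (2:ℝ)) = 2 := by norm_num
  have H := integral_mul_le_Lp_mul_Lq_of_nonneg hconj hfnn
    (Filter.Eventually.of_forall fun _ => zero_le_one)
    (hofReal ▸ hmemf) (hofReal ▸ memLp_const (1:ℝ))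
  have hpow2 : ∀ y : ℝ, y ^ (2:ℝ) = y ^ 2 := fun y => by
    rw [show (2:ℝ) = ((2:ℕ):ℝ) by norm_num, Real.rpow_natCast]
  have hμuniv : ∫ _, (1:ℝ) ∂μ = 1 := by
    rw [MeasureTheory.integral_const, smul_eq_mul, mul_one, hμ, measureReal_def, Measure.restrict_apply_univ, hs,
      Real.volume_Ioc]
    rw [ENNReal.toReal_ofReal (by linarith)]
    ring
  simp only [mul_one, hpow2, one_pow] at H
  rw [hμuniv, Real.one_rpow, mul_one] at H
  have hI : ∫ t, f t ∂μ = ((x + 1) ^ α - x ^ α) / α := by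
    have := integral_rpow (a := x) (b := x + 1) (r := α - 1) (Or.inl (by linarith))
    rw [intervalIntegral.integral_of_le hab] at this
    rw [hμ, hs]
    rw [this]
    norm_num
  have hJ : ∫ t, f t ^ 2 ∂μ = ((x + 1) ^ (2 * α - 1) - x ^ (2 * α - 1)) / (2 * α - 1) := by
    rw [integral_congr_ae hsq]
    have := integral_rpow (a := x) (b := x + 1) (r := 2 * α - 2) (Or.inl (by linarith))
    rw [intervalIntegral.integral_of_le hab] at this
    rw [hμ, hs, hg]
    rw [this, show 2 * α - 2 + 1 = 2 * α - 1 by ring]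
  set I := ∫ t, f t ∂μ
  set J := ∫ t, f t ^ 2 ∂μ
  have hInn : 0 ≤ I := integral_nonneg_of_ae hfnn
  have hJnn : 0 ≤ J := by
    apply MeasureTheory.integral_nonneg
    intro t; positivity
  have hsqle : I ^ 2 ≤ J := by
    calc I ^ 2 ≤ (J ^ ((1:ℝ)/2)) ^ 2 := by
          apply pow_le_pow_left₀ hInn H
      _ = J := by
          rw [← Real.rpow_natCast (J ^ ((1:ℝ)/2)) 2, ← Real.rpow_mul hJnn]
          norm_num
  have hval : (x + 1) ^ α - x ^ α = α * I := by
    rw [hI]; field_simp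
  rw [hval, mul_pow]
  calc α ^ 2 * I ^ 2 ≤ α ^ 2 * J := by
        apply mul_le_mul_of_nonneg_left hsqle (by positivity)
    _ = α ^ 2 / (2 * α - 1) * ((x + 1) ^ (2 * α - 1) - x ^ (2 * α - 1)) := by
        rw [hJ]; field_simp

theorem stmt1 (α : ℝ) (hα1 : 1 / 2 < α) (hα2 : α < 1) (n : ℕ) (hn : 1 ≤ n) :
    ((n : ℝ) + 1) * ∑ k ∈ Finset.Icc 1 n,
        ((1 - (k : ℝ) / ((n : ℝ) + 1)) ^ α - (1 - ((k : ℝ) + 1) / ((n : ℝ) + 1)) ^ α) ^ 2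
      ≤ α ^ 2 / (2 * α - 1) := by
  have h2α : 0 < 2 * α - 1 := by linarith
  have hN : (0:ℝ) < (n:ℝ) + 1 := by positivity
  set C := α ^ 2 / (2 * α - 1) with hC
  have hCnn : 0 ≤ C := by positivity
  set D := ((n:ℝ) + 1) ^ α with hD
  have hD0 : 0 < D := Real.rpow_pos_of_pos hN α
  set φ : ℕ → ℝ := fun j => (j:ℝ) ^ (2 * α - 1) with hφ
  have hterm : ∀ k ∈ Finset.Icc 1 n,
      ((1 - (k : ℝ) / ((n : ℝ) + 1)) ^ α - (1 - ((k : ℝ) + 1) / ((n : ℝ) + 1)) ^ α) ^ 2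
      ≤ C / D ^ 2 * (φ (n - k + 1) - φ (n - k)) := by
    intro k hk
    obtain ⟨hk1, hkn⟩ := Finset.mem_Icc.mp hk
    have hcast : ((n - k : ℕ):ℝ) = (n:ℝ) - (k:ℝ) := by
      rw [Nat.cast_sub hkn]
    have e1 : 1 - (k:ℝ) / ((n:ℝ) + 1) = (((n - k : ℕ):ℝ) + 1) / ((n:ℝ) + 1) := by
      rw [hcast]; field_simp; ring
    have e2 : 1 - ((k:ℝ) + 1) / ((n:ℝ) + 1) = ((n - k : ℕ):ℝ) / ((n:ℝ) + 1) := by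
      rw [hcast]; field_simp; ring
    have hx : (0:ℝ) ≤ ((n - k : ℕ):ℝ) := Nat.cast_nonneg _
    rw [e1, e2, Real.div_rpow (by positivity) hN.le, Real.div_rpow hx hN.le,
      div_sub_div_same, div_pow, hφ]
    simp only
    rw [show C / D ^ 2 * (((↑(n - k + 1):ℝ)) ^ (2*α-1) - ((↑(n - k):ℝ)) ^ (2*α-1))
        = C * (((↑(n - k + 1):ℝ)) ^ (2*α-1) - ((↑(n - k):ℝ)) ^ (2*α-1)) / D ^ 2 by ring]
    rw [div_le_div_iff_of_pos_right (by positivity)]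
    have := key_ineq α hα1 hα2 ((n - k : ℕ):ℝ) hx
    rw [hC]
    convert this using 3
    push_cast
    rfl
    push_cast
    ring
  have hsum : ∑ k ∈ Finset.Icc 1 n, (φ (n - k + 1) - φ (n - k)) = (n:ℝ) ^ (2 * α - 1) := by
    have h1 : ∑ k ∈ Finset.Icc 1 n, (φ (n - k + 1) - φ (n - k))
        = ∑ j ∈ Finset.range n, (φ (j + 1) - φ j) := by
      rw [← Finset.sum_range_reflect]
      rw [show Finset.Icc 1 n = Finset.Ico 1 (n + 1) from (Finset.Ico_add_one_right_eq_Icc 1 n).symm]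
      rw [Finset.sum_Ico_eq_sum_range]
      apply Finset.sum_congr (by norm_num)
      intro i hi
      have hi' : i < n := by
        have := Finset.mem_range.mp hi
        omega
      congr 2 <;> omega
    rw [h1, Finset.sum_range_sub φ, hφ]
    simp only
    rw [Nat.cast_zero, Real.zero_rpow (ne_of_gt h2α), sub_zero]
  have hD2 : D ^ 2 = ((n:ℝ) + 1) * ((n:ℝ) + 1) ^ (2 * α - 1) := by
    rw [hD, ← Real.rpow_natCast (((n:ℝ) + 1) ^ α) 2, ← Real.rpow_mul hN.le,
      show (α * ((2:ℕ):ℝ)) = 1 + (2 * α - 1) by push_cast; ring,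
      Real.rpow_add hN, Real.rpow_one]
  have hle : ((n:ℝ)) ^ (2 * α - 1) ≤ ((n:ℝ) + 1) ^ (2 * α - 1) :=
    Real.rpow_le_rpow (Nat.cast_nonneg n) (by linarith) (le_of_lt h2α)
  calc ((n : ℝ) + 1) * ∑ k ∈ Finset.Icc 1 n,
        ((1 - (k : ℝ) / ((n : ℝ) + 1)) ^ α - (1 - ((k : ℝ) + 1) / ((n : ℝ) + 1)) ^ α) ^ 2
      ≤ ((n : ℝ) + 1) * ∑ k ∈ Finset.Icc 1 n, (C / D ^ 2 * (φ (n - k + 1) - φ (n - k))) := by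
        apply mul_le_mul_of_nonneg_left (Finset.sum_le_sum hterm) hN.le
    _ = ((n : ℝ) + 1) * (C / D ^ 2 * (n:ℝ) ^ (2 * α - 1)) := by
        rw [← Finset.mul_sum, hsum]
    _ = C * (((n:ℝ) + 1) * (n:ℝ) ^ (2 * α - 1)) / D ^ 2 := by ring
    _ ≤ C * (((n:ℝ) + 1) * ((n:ℝ) + 1) ^ (2 * α - 1)) / D ^ 2 := by
        gcongr
    _ = C := by rw [← hD2]; field_simp
end

section
/- If α ∈ (1/2, 1), then sup over n ≥ 1 of (n+1)^{1−2α} · Σ_{k=1}^{n} ((n+1−k)^α − (n−k)^α)² is finite, bounded by α²/(2α−1). -/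
open scoped BigOperators
open MeasureTheory

private lemma key_step (α : ℝ) (hα1 : 1 / 2 < α) (hα2 : α < 1) (a : ℝ) (ha : 0 ≤ a) :
    ((a+1)^α - a^α)^2 ≤ α^2/(2*α-1) * ((a+1)^(2*α-1) - a^(2*α-1)) := by
  have hα0 : 0 < α := by linarith
  have h2α : 0 < 2*α - 1 := by linarith
  have hab : a ≤ a + 1 := by linarith
  have hint1 : ∫ t in a..(a+1), t^(α-1) = ((a+1)^α - a^α)/α := by
    rw [integral_rpow (Or.inl (by linarith : (-1:ℝ) < α - 1))]
    norm_num
  have hint2 : ∫ t in a..(a+1), t^(2*α-2) = ((a+1)^(2*α-1) - a^(2*α-1))/(2*α-1) := by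
    rw [integral_rpow (Or.inl (by linarith : (-1:ℝ) < 2*α - 2))]
    ring_nf
  -- Cauchy–Schwarz
  set μ : Measure ℝ := volume.restrict (Set.Ioc a (a+1)) with hμ
  have hμuniv : μ Set.univ = 1 := by
    rw [hμ, Measure.restrict_apply_univ, Real.volume_Ioc]
    norm_num
  haveI : IsFiniteMeasure μ := ⟨by rw [hμuniv]; exact ENNReal.one_lt_top⟩
  have hpos : ∀ᵐ t ∂μ, t ∈ Set.Ioc a (a+1) := ae_restrict_mem measurableSet_Ioc
  have hf_nonneg : 0 ≤ᵐ[μ] fun t : ℝ => t^(α-1) := by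
    filter_upwards [hpos] with t ht
    exact Real.rpow_nonneg (le_of_lt (lt_of_le_of_lt ha ht.1)) _
  have hf_meas : AEStronglyMeasurable (fun t : ℝ => t^(α-1)) μ :=
    (by fun_prop : Measurable fun t : ℝ => t^(α-1)).aestronglyMeasurable
  have hsq_eq : (fun t : ℝ => (t^(α-1))^2) =ᵐ[μ] fun t : ℝ => t^(2*α-2) := by
    filter_upwards [hpos] with t ht
    have ht0 : 0 ≤ t := le_of_lt (lt_of_le_of_lt ha ht.1)
    rw [← Real.rpow_natCast (t^(α-1)) 2, ← Real.rpow_mul ht0]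
    norm_num; ring_nf
  have hsq_int : Integrable (fun t : ℝ => (t^(α-1))^2) μ := by
    have : IntervalIntegrable (fun t : ℝ => t^(2*α-2)) volume a (a+1) :=
      intervalIntegral.intervalIntegrable_rpow' (by linarith)
    rw [intervalIntegrable_iff_integrableOn_Ioc_of_le hab] at this
    exact this.congr hsq_eq.symm
  have hmemf : MemLp (fun t : ℝ => t^(α-1)) (ENNReal.ofReal 2) μ := by
    have h2 : ENNReal.ofReal (2:ℝ) = 2 := by norm_num
    rw [h2]
    exact (memLp_two_iff_integrable_sq hf_meas).2 hsq_int
  have hmemg : MemLp (fun _ : ℝ => (1:ℝ)) (ENNReal.ofReal 2) μ := memLp_const 1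
  have hpq : (2:ℝ).HolderConjugate 2 := ⟨by norm_num, by norm_num, by norm_num⟩
  have hCS := integral_mul_le_Lp_mul_Lq_of_nonneg hpq hf_nonneg
    (Filter.Eventually.of_forall fun _ => zero_le_one) hmemf hmemg
  simp only [mul_one, Real.one_rpow] at hCS
  have hg1 : ∫ _ : ℝ, (1:ℝ) ∂μ = 1 := by
    rw [integral_const, measureReal_def, hμuniv]; simp
  rw [hg1, Real.one_rpow, mul_one] at hCS
  have hJ : ∫ t : ℝ, (t^(α-1))^(2:ℝ) ∂μ = ∫ t in a..(a+1), t^(2*α-2) := by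
    rw [intervalIntegral.integral_of_le hab]
    refine integral_congr_ae ?_
    filter_upwards [hpos] with t ht
    have ht0 : 0 ≤ t := le_of_lt (lt_of_le_of_lt ha ht.1)
    rw [← Real.rpow_mul ht0]
    ring_nf
  rw [hJ, hint2] at hCS
  have hI : ∫ t : ℝ, t^(α-1) ∂μ = ((a+1)^α - a^α)/α := by
    rw [hμ, ← intervalIntegral.integral_of_le hab, hint1]
  rw [hI] at hCS
  -- hCS : ((a+1)^α - a^α)/α ≤ (((a+1)^(2α-1) - a^(2α-1))/(2α-1))^(1/2)
  have hInn : 0 ≤ ((a+1)^α - a^α)/α := by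
    apply div_nonneg _ hα0.le
    have := Real.rpow_le_rpow ha hab hα0.le
    linarith
  have hJnn : 0 ≤ ((a+1)^(2*α-1) - a^(2*α-1))/(2*α-1) := by
    apply div_nonneg _ h2α.le
    have := Real.rpow_le_rpow ha hab h2α.le
    linarith
  have hsq : (((a+1)^α - a^α)/α)^2 ≤ ((a+1)^(2*α-1) - a^(2*α-1))/(2*α-1) := by
    calc (((a+1)^α - a^α)/α)^2
        ≤ ((((a+1)^(2*α-1) - a^(2*α-1))/(2*α-1))^((1:ℝ)/2))^2 := by
          exact pow_le_pow_left₀ hInn hCS 2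
      _ = ((a+1)^(2*α-1) - a^(2*α-1))/(2*α-1) := by
          rw [← Real.rpow_natCast (_ ^ ((1:ℝ)/2)) 2, ← Real.rpow_mul hJnn]
          norm_num
  rw [div_pow, div_le_div_iff₀ (by positivity) h2α] at hsq
  rw [div_mul_eq_mul_div, le_div_iff₀ h2α]
  nlinarith [sq_nonneg α]

theorem stmt9 (α : ℝ) (hα1 : 1 / 2 < α) (hα2 : α < 1) :
    ∀ n : ℕ, 1 ≤ n →
      ((n : ℝ) + 1) ^ (1 - 2 * α) * ∑ k ∈ Finset.Icc 1 n,
          (((n : ℝ) + 1 - (k : ℝ)) ^ α - ((n : ℝ) - (k : ℝ)) ^ α) ^ 2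
        ≤ α ^ 2 / (2 * α - 1) := by
  intro n hn
  have hα0 : 0 < α := by linarith
  have h2α : 0 < 2*α - 1 := by linarith
  have hn1 : (0:ℝ) < (n:ℝ) + 1 := by positivity
  -- reindex
  have hsum : ∑ k ∈ Finset.Icc 1 n,
      (((n : ℝ) + 1 - (k : ℝ)) ^ α - ((n : ℝ) - (k : ℝ)) ^ α) ^ 2
      = ∑ j ∈ Finset.range n, (((j:ℝ)+1)^α - (j:ℝ)^α)^2 := by
    refine Finset.sum_nbij' (fun k => n - k) (fun j => n - j) ?_ ?_ ?_ ?_ ?_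
    · intro k hk
      simp only [Finset.mem_Icc] at hk
      simp only [Finset.mem_range]
      omega
    · intro j hj
      simp only [Finset.mem_range] at hj
      simp only [Finset.mem_Icc]
      omega
    · intro k hk; simp only [Finset.mem_Icc] at hk; omega
    · intro j hj; simp only [Finset.mem_range] at hj; omega
    · intro k hk
      simp only [Finset.mem_Icc] at hk
      have h1 : ((n - k : ℕ) : ℝ) = (n:ℝ) - (k:ℝ) := by
        push_cast [Nat.cast_sub hk.2]; ring
      rw [h1]
      ring_nf
  rw [hsum]
  have hterm : ∀ j ∈ Finset.range n, (((j:ℝ)+1)^α - (j:ℝ)^α)^2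
      ≤ α^2/(2*α-1) * (((j:ℝ)+1)^(2*α-1) - (j:ℝ)^(2*α-1)) := fun j _ =>
    key_step α hα1 hα2 j (Nat.cast_nonneg j)
  have hsum2 : ∑ j ∈ Finset.range n, (((j:ℝ)+1)^α - (j:ℝ)^α)^2
      ≤ α^2/(2*α-1) * (n:ℝ)^(2*α-1) := by
    calc ∑ j ∈ Finset.range n, (((j:ℝ)+1)^α - (j:ℝ)^α)^2
        ≤ ∑ j ∈ Finset.range n, α^2/(2*α-1) * (((j:ℝ)+1)^(2*α-1) - (j:ℝ)^(2*α-1)) :=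
          Finset.sum_le_sum hterm
      _ = α^2/(2*α-1) * ∑ j ∈ Finset.range n, (((j:ℝ)+1)^(2*α-1) - (j:ℝ)^(2*α-1)) := by
          rw [Finset.mul_sum]
      _ = α^2/(2*α-1) * (n:ℝ)^(2*α-1) := by
          have htel : ∑ j ∈ Finset.range n,
              ((((j+1:ℕ)):ℝ)^(2*α-1) - ((j:ℕ):ℝ)^(2*α-1)) = (n:ℝ)^(2*α-1) - ((0:ℕ):ℝ)^(2*α-1) :=
            Finset.sum_range_sub (fun j : ℕ => ((j:ℕ):ℝ)^(2*α-1)) n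
          rw [show ∑ j ∈ Finset.range n, (((j:ℝ)+1)^(2*α-1) - (j:ℝ)^(2*α-1))
              = ∑ j ∈ Finset.range n, ((((j+1:ℕ)):ℝ)^(2*α-1) - ((j:ℕ):ℝ)^(2*α-1)) by
            refine Finset.sum_congr rfl fun j _ => ?_; push_cast; ring_nf]
          rw [htel]
          simp [Real.zero_rpow (by linarith : 2*α-1 ≠ 0)]
  have hmono : (n:ℝ)^(2*α-1) ≤ ((n:ℝ)+1)^(2*α-1) :=
    Real.rpow_le_rpow (Nat.cast_nonneg n) (by linarith) h2α.le
  calc ((n : ℝ) + 1) ^ (1 - 2 * α) * ∑ j ∈ Finset.range n, (((j:ℝ)+1)^α - (j:ℝ)^α)^2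
      ≤ ((n : ℝ) + 1) ^ (1 - 2 * α) * (α^2/(2*α-1) * ((n:ℝ)+1)^(2*α-1)) := by
        apply mul_le_mul_of_nonneg_left _ (Real.rpow_nonneg hn1.le _)
        exact hsum2.trans (by
          apply mul_le_mul_of_nonneg_left hmono
          positivity)
    _ = α ^ 2 / (2 * α - 1) := by
        rw [mul_comm (α^2/(2*α-1)), ← mul_assoc, ← Real.rpow_add hn1]
        norm_num
end

section
/- For α = 1/2, the quantity (n+1)^0 · (m/(n+1)) Σ_{k=m}^{n} (√(n+1−k) − √(n−k))² /(n+1) with m = ⌈(n+1)/2⌉ is unbounded in n; i.e., sup_n m/(n+1) · Σ_{k=m}^n ((1−k/(n+1))^{1/2} − (1−(k+1)/(n+1))^{1/2})² = ∞. -/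
open scoped BigOperators

-- per-term lower bound
lemma term_lb (A c : ℝ) (hA : 0 < A) (hc : 1 ≤ c) (hcA : c ≤ A) :
    1/(4*A*c) ≤ ((c/A) ^ ((1:ℝ)/2) - ((c-1)/A) ^ ((1:ℝ)/2))^2 := by
  rw [← Real.sqrt_eq_rpow, ← Real.sqrt_eq_rpow]
  set s := Real.sqrt (c/A) with hs
  set t := Real.sqrt ((c-1)/A) with ht
  have ha0 : (0:ℝ) < c/A := div_pos (by linarith) hA
  have hb0 : (0:ℝ) ≤ (c-1)/A := div_nonneg (by linarith) hA.le
  have hs2 : s^2 = c/A := Real.sq_sqrt ha0.le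
  have ht2 : t^2 = (c-1)/A := Real.sq_sqrt hb0
  have hs0 : 0 < s := Real.sqrt_pos.mpr ha0
  have ht0 : 0 ≤ t := Real.sqrt_nonneg _
  have hst : t ≤ s := Real.sqrt_le_sqrt (by gcongr; linarith)
  have h1 : A*(s^2 - t^2) = 1 := by
    rw [hs2, ht2]; field_simp; ring
  have h2 : 1 ≤ 2*A*s*(s-t) := by
    nlinarith [mul_nonneg hA.le (sq_nonneg (s-t))]
  have hc' : c = A*s^2 := by
    field_simp at hs2; linarith [hs2]
  rw [div_le_iff₀ (by positivity)]
  nlinarith [h2, sq_nonneg (2*A*s*(s-t)-1)]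


/-- The key divergence: with m = ⌈(n+1)/2⌉, the quantity
m · Σ_{k=m}^n ((1−k/(n+1))^{1/2} − (1−(k+1)/(n+1))^{1/2})²
(= (m/(n+1)) · Σ_{k=m}^n (√(n+1−k) − √(n−k))²) is unbounded in n. -/
theorem stmt10 :
    ¬ BddAbove (Set.range fun n : ℕ =>
      (⌈((n : ℝ) + 1) / 2⌉₊ : ℝ) * ∑ k ∈ Finset.Icc ⌈((n : ℝ) + 1) / 2⌉₊ n,
        ((1 - (k : ℝ) / ((n : ℝ) + 1)) ^ ((1 : ℝ) / 2)
          - (1 - ((k : ℝ) + 1) / ((n : ℝ) + 1)) ^ ((1 : ℝ) / 2)) ^ 2) := by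
  rintro ⟨M, hM⟩
  obtain ⟨N, hN⟩ := (Real.tendsto_sum_range_one_div_nat_succ_atTop.eventually_gt_atTop
    (8*M)).exists
  have hf := hM (Set.mem_range_self (2*N+1))
  set A : ℝ := ((2*N+1 : ℕ) : ℝ) + 1 with hA
  have hAval : A = 2*(N:ℝ)+2 := by rw [hA]; push_cast; ring
  have hApos : (0:ℝ) < A := by rw [hAval]; positivity
  have hm : ⌈A / 2⌉₊ = N+1 := by
    have : A / 2 = ((N+1:ℕ):ℝ) := by rw [hAval]; push_cast; ring
    rw [this, Nat.ceil_natCast]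
  rw [hm] at hf
  -- lower bound each term
  have hterm : ∀ k ∈ Finset.Icc (N+1) (2*N+1),
      (1:ℝ)/(4*A*(A - (k:ℝ))) ≤
      ((1 - (k : ℝ) / A) ^ ((1:ℝ)/2) - (1 - ((k:ℝ)+1) / A) ^ ((1:ℝ)/2))^2 := by
    intro k hk
    rw [Finset.mem_Icc] at hk
    have hk1 : (k:ℝ) ≤ 2*(N:ℝ)+1 := by exact_mod_cast Nat.cast_le.mpr hk.2
    have h1 : 1 - (k:ℝ)/A = (A - k)/A := by field_simp
    have h2 : 1 - ((k:ℝ)+1)/A = ((A - k) - 1)/A := by field_simp; ring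
    rw [h1, h2]
    exact term_lb A (A - k) hApos (by rw [hAval]; linarith) (by simp [hAval])
  have hsum1 : ∑ k ∈ Finset.Icc (N+1) (2*N+1), (1:ℝ)/(4*A*(A - (k:ℝ))) ≤
      ∑ k ∈ Finset.Icc (N+1) (2*N+1),
      ((1 - (k : ℝ) / A) ^ ((1:ℝ)/2) - (1 - ((k:ℝ)+1) / A) ^ ((1:ℝ)/2))^2 :=
    Finset.sum_le_sum hterm
  -- reindex
  have hre : ∑ k ∈ Finset.Icc (N+1) (2*N+1), (1:ℝ)/(4*A*(A - (k:ℝ)))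
      = ∑ j ∈ Finset.range (N+1), (1:ℝ)/(4*A*((j:ℝ)+1)) := by
    refine Finset.sum_nbij' (fun k => 2*N+1-k) (fun j => 2*N+1-j) ?_ ?_ ?_ ?_ ?_
    · intro a ha; simp only [Finset.mem_Icc] at ha; simp only [Finset.mem_range]; omega
    · intro b hb; simp only [Finset.mem_range] at hb; simp only [Finset.mem_Icc]; omega
    · intro a ha; simp only [Finset.mem_Icc] at ha; omega
    · intro b hb; simp only [Finset.mem_range] at hb; omega
    · intro a ha
      rw [Finset.mem_Icc] at ha
      congr 1
      have : ((2*N+1-a : ℕ) : ℝ) = 2*(N:ℝ)+1 - a := by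
        have := ha.2; push_cast [Nat.cast_sub this]; ring
      rw [this, hAval]; ring
  have hH : ∑ j ∈ Finset.range (N+1), (1:ℝ)/(4*A*((j:ℝ)+1))
      = (1/(4*A)) * ∑ j ∈ Finset.range (N+1), (1:ℝ)/((j:ℝ)+1) := by
    rw [Finset.mul_sum]
    refine Finset.sum_congr rfl fun j _ => ?_
    field_simp
  -- harmonic sum comparison
  have hmono : 8*M < ∑ j ∈ Finset.range (N+1), (1:ℝ)/((j:ℝ)+1) := by
    refine lt_of_lt_of_le hN ?_
    refine Finset.sum_le_sum_of_subset_of_nonneg (by simp) fun j _ _ => by positivity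
  have hfinal : ((N:ℝ)+1) * ((1/(4*A)) * ∑ j ∈ Finset.range (N+1), (1:ℝ)/((j:ℝ)+1))
      ≤ ((N+1:ℕ):ℝ) * ∑ k ∈ Finset.Icc (N+1) (2*N+1),
      ((1 - (k : ℝ) / A) ^ ((1:ℝ)/2) - (1 - ((k:ℝ)+1) / A) ^ ((1:ℝ)/2))^2 := by
    push_cast
    refine mul_le_mul_of_nonneg_left ?_ (by positivity)
    rw [← hH, ← hre]; exact hsum1
  have hcoef : ((N:ℝ)+1) * (1/(4*A)) = 1/8 := by
    rw [hAval]; field_simp; ring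
  have hsumpos : (0:ℝ) ≤ ∑ j ∈ Finset.range (N+1), (1:ℝ)/((j:ℝ)+1) := by positivity
  nlinarith [hfinal, hf, hmono]
end

section
/- Let T_c be the upper-triangular infinite matrix with diagonal entries (T_c)_{kk} = c_k and entries (T_c)_{jk} = c_k − c_{k−1} for j < k (indices ≥ 1), where (c_k) is eventually zero with c_k = 0 for k > n. Then ‖T_c : ℓ² → ℓ²‖² ≤ (n+1) Σ_{k=1}^{n} |c_{k+1} − c_k|². -/
open scoped BigOperators

private lemma tele17 (c : ℕ → ℂ) (a : ℕ) : ∀ b : ℕ, a ≤ b + 1 →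
    ∑ k ∈ Finset.Icc a b, (c (k + 1) - c k) = c (b + 1) - c a := by
  intro b
  induction b with
  | zero =>
    intro h
    interval_cases a <;> simp
  | succ b ih =>
    intro h
    rcases Nat.lt_or_ge a (b + 2) with h' | h'
    · have ha : a ≤ b + 1 := by omega
      rw [← Finset.insert_Icc_right_eq_Icc_add_one ha, Finset.sum_insert (by simp), ih ha]
      ring
    · have : a = b + 2 := by omega
      subst this
      rw [Finset.Icc_eq_empty (by omega)]
      simp

private lemma cs17 (s : Finset ℕ) (d g : ℕ → ℂ) :
    ‖∑ k ∈ s, d k * g k‖ ^ 2 ≤ (∑ k ∈ s, ‖d k‖ ^ 2) * (∑ k ∈ s, ‖g k‖ ^ 2) := by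
  calc ‖∑ k ∈ s, d k * g k‖ ^ 2 ≤ (∑ k ∈ s, ‖d k‖ * ‖g k‖) ^ 2 := by
        apply pow_le_pow_left₀ (norm_nonneg _)
        exact (norm_sum_le _ _).trans (le_of_eq (by simp [norm_mul]))
    _ ≤ _ := Finset.sum_mul_sq_le_sq_mul_sq s _ _

private lemma expand17 (f : ℕ → ℂ) (N : ℕ) :
    ∑ j ∈ Finset.range N, ∑ k ∈ Finset.range N, Complex.normSq (f k - f j)
      = 2 * ((N : ℝ) * ∑ m ∈ Finset.range N, Complex.normSq (f m))
        - 2 * Complex.normSq (∑ m ∈ Finset.range N, f m) := by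
  have h2 : ∑ j ∈ Finset.range N, ∑ k ∈ Finset.range N,
      (f k * (starRingEnd ℂ) (f j)).re
      = Complex.normSq (∑ m ∈ Finset.range N, f m) := by
    have h3 : ∑ j ∈ Finset.range N, ∑ k ∈ Finset.range N,
        (f k * (starRingEnd ℂ) (f j))
        = (∑ m ∈ Finset.range N, f m) * (starRingEnd ℂ) (∑ m ∈ Finset.range N, f m) := by
      rw [map_sum, Finset.sum_comm, Finset.sum_mul_sum]
    calc ∑ j ∈ Finset.range N, ∑ k ∈ Finset.range N, (f k * (starRingEnd ℂ) (f j)).re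
        = (∑ j ∈ Finset.range N, ∑ k ∈ Finset.range N, (f k * (starRingEnd ℂ) (f j))).re := by
          simp [Complex.re_sum]
      _ = _ := by rw [h3, Complex.mul_conj]; simp
  calc ∑ j ∈ Finset.range N, ∑ k ∈ Finset.range N, Complex.normSq (f k - f j)
      = ∑ j ∈ Finset.range N, ((∑ k ∈ Finset.range N, Complex.normSq (f k))
          + (N : ℝ) * Complex.normSq (f j)
          - 2 * ∑ k ∈ Finset.range N, (f k * (starRingEnd ℂ) (f j)).re) := by
        apply Finset.sum_congr rfl
        intro j _
        simp only [Complex.normSq_sub]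
        rw [Finset.sum_sub_distrib, Finset.sum_add_distrib, Finset.sum_const,
          Finset.card_range, nsmul_eq_mul, Finset.mul_sum]
    _ = _ := by
        rw [Finset.sum_sub_distrib, Finset.sum_add_distrib, Finset.sum_const,
          Finset.card_range, nsmul_eq_mul, ← Finset.mul_sum, ← Finset.mul_sum, h2]
        ring

private lemma pair17 (f : ℕ → ℂ) (n : ℕ) :
    ∑ j ∈ Finset.range (n + 1), ∑ k ∈ Finset.Icc (j + 1) n, ‖f k - f j‖ ^ 2
      ≤ ((n : ℝ) + 1) * ∑ m ∈ Finset.range (n + 1), ‖f m‖ ^ 2 := by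
  set N := n + 1 with hN
  have hns : ∀ z : ℂ, ‖z‖ ^ 2 = Complex.normSq z := by
    intro z; rw [← Complex.sq_norm]
  have hIcc : ∀ j : ℕ, Finset.Icc (j + 1) n = (Finset.range N).filter (fun k => j < k) := by
    intro j
    ext k
    simp only [Finset.mem_Icc, Finset.mem_filter, Finset.mem_range, hN]
    omega
  have hfull :
      ∑ j ∈ Finset.range N, ∑ k ∈ Finset.range N, ‖f k - f j‖ ^ 2
        ≤ 2 * ((N : ℝ) * ∑ m ∈ Finset.range N, ‖f m‖ ^ 2) := by
    simp only [hns]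
    rw [expand17]
    have := Complex.normSq_nonneg (∑ m ∈ Finset.range N, f m)
    linarith
  have hdouble :
      (∑ j ∈ Finset.range N, ∑ k ∈ Finset.Icc (j + 1) n, ‖f k - f j‖ ^ 2) * 2
        ≤ ∑ j ∈ Finset.range N, ∑ k ∈ Finset.range N, ‖f k - f j‖ ^ 2 := by
    simp only [hIcc, Finset.sum_filter]
    rw [mul_two]
    have hswap : ∑ j ∈ Finset.range N, ∑ k ∈ Finset.range N,
        (if j < k then ‖f k - f j‖ ^ 2 else 0)
        = ∑ j ∈ Finset.range N, ∑ k ∈ Finset.range N,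
        (if k < j then ‖f k - f j‖ ^ 2 else 0) := by
      rw [Finset.sum_comm]
      apply Finset.sum_congr rfl
      intro j _
      apply Finset.sum_congr rfl
      intro k _
      rw [norm_sub_rev]
    nth_rewrite 2 [hswap]
    rw [← Finset.sum_add_distrib]
    apply Finset.sum_le_sum
    intro j _
    rw [← Finset.sum_add_distrib]
    apply Finset.sum_le_sum
    intro k _
    rcases lt_trichotomy j k with h | h | h
    · rw [if_pos h, if_neg (by omega)]; simp
    · rw [if_neg (by omega), if_neg (by omega)]
      have := sq_nonneg ‖f k - f j‖
      linarith
    · rw [if_neg (by omega), if_pos h]; simp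
  have hNc : ((N : ℝ)) = (n : ℝ) + 1 := by push_cast [hN]; ring
  rw [← hNc]
  linarith

/-- Upper bound for the norm of the upper-triangular matrix T_c on ℓ²
(indices shifted so that Lean index j corresponds to matrix index j+1 ≥ 1):
if c_k = 0 for k > n then ‖T_c‖² ≤ (n+1) Σ_{k=1}^n |c_{k+1} − c_k|². -/
theorem stmt17 (c : ℕ → ℂ) (n : ℕ) (hn : 1 ≤ n) (hc : ∀ k, n < k → c k = 0)
    (T : lp (fun _ : ℕ => ℂ) 2 →L[ℂ] lp (fun _ : ℕ => ℂ) 2)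
    (hT : ∀ (f : lp (fun _ : ℕ => ℂ) 2) (j : ℕ),
      (T f : ℕ → ℂ) j = ∑' k : ℕ,
        (if j = k then c (k + 1) else if j < k then c (k + 1) - c k else 0) * (f : ℕ → ℂ) k) :
    ‖T‖ ^ 2 ≤ ((n : ℝ) + 1) * ∑ k ∈ Finset.Icc 1 n, ‖c (k + 1) - c k‖ ^ 2 := by
  set S : ℝ := ∑ k ∈ Finset.Icc 1 n, ‖c (k + 1) - c k‖ ^ 2 with hSdef
  have hS0 : 0 ≤ S := Finset.sum_nonneg fun _ _ => sq_nonneg _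
  -- row formula
  have hrow : ∀ (f : lp (fun _ : ℕ => ℂ) 2) (j : ℕ),
      (T f : ℕ → ℂ) j
        = ∑ k ∈ Finset.Icc (j + 1) n, (c (k + 1) - c k) * ((f : ℕ → ℂ) k - (f : ℕ → ℂ) j) := by
    intro f j
    rw [hT]
    have hout : ∀ k ∉ Finset.Icc j n,
        (if j = k then c (k + 1) else if j < k then c (k + 1) - c k else 0) * (f : ℕ → ℂ) k
          = 0 := by
      intro k hk
      simp only [Finset.mem_Icc, not_and_or, not_le] at hk
      rcases hk with hk | hk
      · have h1 : ¬ j = k := by omega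
        have h2 : ¬ j < k := by omega
        simp [h1, h2]
      · have h1 : c (k + 1) = 0 := hc _ (by omega)
        have h2 : c k = 0 := hc _ (by omega)
        by_cases hjk : j = k
        · simp [hjk, h1]
        · by_cases hlt : j < k
          · simp [hjk, hlt, h1, h2]
          · simp [hjk, hlt]
    rw [tsum_eq_sum hout]
    rcases le_or_gt j n with hj | hj
    · have hins : Finset.Icc j n = insert j (Finset.Icc (j + 1) n) := by
        rw [Finset.Icc_add_one_left_eq_Ioc, Finset.Ioc_insert_left hj]
      rw [hins, Finset.sum_insert (by simp)]
      have hcj : c (j + 1) = -∑ k ∈ Finset.Icc (j + 1) n, (c (k + 1) - c k) := by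
        rw [tele17 c (j + 1) n (by omega), hc (n + 1) (by omega)]
        ring
      have hterm : ∀ k ∈ Finset.Icc (j + 1) n,
          (if j = k then c (k + 1) else if j < k then c (k + 1) - c k else 0) * (f : ℕ → ℂ) k
            = (c (k + 1) - c k) * (f : ℕ → ℂ) k := by
        intro k hk
        simp only [Finset.mem_Icc] at hk
        have h1 : ¬ j = k := by omega
        have h2 : j < k := by omega
        simp [h1, h2]
      rw [Finset.sum_congr rfl hterm]
      rw [if_pos rfl, hcj]
      have expand : ∑ k ∈ Finset.Icc (j + 1) n,
          (c (k + 1) - c k) * ((f : ℕ → ℂ) k - (f : ℕ → ℂ) j)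
          = ∑ k ∈ Finset.Icc (j + 1) n, (c (k + 1) - c k) * (f : ℕ → ℂ) k
            - (∑ k ∈ Finset.Icc (j + 1) n, (c (k + 1) - c k)) * (f : ℕ → ℂ) j := by
        rw [Finset.sum_mul, ← Finset.sum_sub_distrib]
        exact Finset.sum_congr rfl fun k _ => by ring
      rw [expand]
      ring
    · rw [Finset.Icc_eq_empty (by omega), Finset.Icc_eq_empty (by omega)]
      simp
  have hp2 : (0 : ℝ) < (2 : ENNReal).toReal := by norm_num
  have h2r : ∀ x : ℝ, x ^ ((2 : ENNReal).toReal) = x ^ 2 := by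
    intro x
    rw [show ((2 : ENNReal).toReal) = ((2 : ℕ) : ℝ) by norm_num, Real.rpow_natCast]
  have key : ∀ f : lp (fun _ : ℕ => ℂ) 2,
      ‖T f‖ ^ 2 ≤ (((n : ℝ) + 1) * S) * ‖f‖ ^ 2 := by
    intro f
    have hfsum : HasSum (fun i => ‖(f : ℕ → ℂ) i‖ ^ 2) (‖f‖ ^ 2) := by
      have := lp.hasSum_norm hp2 f
      simpa [h2r] using this
    have hTsum : HasSum (fun i => ‖(T f : ℕ → ℂ) i‖ ^ 2) (‖T f‖ ^ 2) := by
      have := lp.hasSum_norm hp2 (T f)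
      simpa [h2r] using this
    have hzero : ∀ j ∉ Finset.range (n + 1), ‖(T f : ℕ → ℂ) j‖ ^ 2 = 0 := by
      intro j hj
      simp only [Finset.mem_range, not_lt] at hj
      rw [hrow, Finset.Icc_eq_empty (by omega)]
      simp
    have hTeq : ‖T f‖ ^ 2 = ∑ j ∈ Finset.range (n + 1), ‖(T f : ℕ → ℂ) j‖ ^ 2 :=
      hTsum.unique (hasSum_sum_of_ne_finset_zero hzero)
    have hfle : ∑ m ∈ Finset.range (n + 1), ‖(f : ℕ → ℂ) m‖ ^ 2 ≤ ‖f‖ ^ 2 :=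
      sum_le_hasSum _ (fun i _ => sq_nonneg _) hfsum
    rw [hTeq]
    calc ∑ j ∈ Finset.range (n + 1), ‖(T f : ℕ → ℂ) j‖ ^ 2
        ≤ ∑ j ∈ Finset.range (n + 1),
            S * ∑ k ∈ Finset.Icc (j + 1) n, ‖(f : ℕ → ℂ) k - (f : ℕ → ℂ) j‖ ^ 2 := by
          apply Finset.sum_le_sum
          intro j _
          rw [hrow]
          refine (cs17 _ _ _).trans ?_
          apply mul_le_mul_of_nonneg_right ?_ (Finset.sum_nonneg fun _ _ => sq_nonneg _)
          apply Finset.sum_le_sum_of_subset_of_nonneg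
          · intro k hk
            simp only [Finset.mem_Icc] at *
            omega
          · intros
            exact sq_nonneg _
      _ = S * ∑ j ∈ Finset.range (n + 1),
            ∑ k ∈ Finset.Icc (j + 1) n, ‖(f : ℕ → ℂ) k - (f : ℕ → ℂ) j‖ ^ 2 := by
          rw [Finset.mul_sum]
      _ ≤ S * (((n : ℝ) + 1) * ∑ m ∈ Finset.range (n + 1), ‖(f : ℕ → ℂ) m‖ ^ 2) :=
          mul_le_mul_of_nonneg_left (pair17 _ n) hS0
      _ ≤ (((n : ℝ) + 1) * S) * ‖f‖ ^ 2 := by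
          rw [show S * (((n : ℝ) + 1) * ∑ m ∈ Finset.range (n + 1), ‖(f : ℕ → ℂ) m‖ ^ 2)
              = (((n : ℝ) + 1) * S) * ∑ m ∈ Finset.range (n + 1), ‖(f : ℕ → ℂ) m‖ ^ 2 by ring]
          have hC : (0 : ℝ) ≤ ((n : ℝ) + 1) * S := by positivity
          exact mul_le_mul_of_nonneg_left hfle hC
  have hC : (0 : ℝ) ≤ ((n : ℝ) + 1) * S := by positivity
  have hop : ‖T‖ ≤ Real.sqrt (((n : ℝ) + 1) * S) := by
    apply T.opNorm_le_bound (Real.sqrt_nonneg _)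
    intro f
    have h1 : ‖T f‖ ≤ Real.sqrt ((((n : ℝ) + 1) * S) * ‖f‖ ^ 2) := by
      rw [← Real.sqrt_sq (norm_nonneg (T f))]
      exact Real.sqrt_le_sqrt (key f)
    calc ‖T f‖ ≤ _ := h1
      _ = Real.sqrt (((n : ℝ) + 1) * S) * ‖f‖ := by
          rw [Real.sqrt_mul hC, Real.sqrt_sq (norm_nonneg f)]
  calc ‖T‖ ^ 2 ≤ (Real.sqrt (((n : ℝ) + 1) * S)) ^ 2 :=
        pow_le_pow_left₀ (norm_nonneg T) hop 2
    _ = ((n : ℝ) + 1) * S := Real.sq_sqrt hC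
end

section
/- Let (c_k)_{k≥1} be eventually zero and T_c the upper-triangular matrix with (T_c)_{kk} = c_k and (T_c)_{jk} = c_k − c_{k−1} for j < k. Then for all integers 1 ≤ m ≤ n, ‖T_c : ℓ² → ℓ²‖² ≥ m · Σ_{k=m}^{n} |c_{k+1} − c_k|². -/
open scoped BigOperators

/-- Lower bound for the norm of the upper-triangular matrix T_c on ℓ²
(indices shifted so that Lean index j corresponds to matrix index j+1 ≥ 1):
for 1 ≤ m ≤ n, ‖T_c‖² ≥ m Σ_{k=m}^n |c_{k+1} − c_k|². -/
theorem stmt18 (c : ℕ → ℂ) (hc : ∃ N : ℕ, ∀ k, N < k → c k = 0)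
    (m n : ℕ) (hm : 1 ≤ m) (hmn : m ≤ n)
    (T : lp (fun _ : ℕ => ℂ) 2 →L[ℂ] lp (fun _ : ℕ => ℂ) 2)
    (hT : ∀ (f : lp (fun _ : ℕ => ℂ) 2) (j : ℕ),
      (T f : ℕ → ℂ) j = ∑' k : ℕ,
        (if j = k then c (k + 1) else if j < k then c (k + 1) - c k else 0) * (f : ℕ → ℂ) k) :
    (m : ℝ) * ∑ k ∈ Finset.Icc m n, ‖c (k + 1) - c k‖ ^ 2 ≤ ‖T‖ ^ 2 := by
  set d : ℕ → ℂ := fun k => c (k + 1) - c k with hd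
  set S : ℝ := ∑ k ∈ Finset.Icc m n, ‖d k‖ ^ 2 with hS
  have hS0 : 0 ≤ S := Finset.sum_nonneg fun _ _ => by positivity
  rcases eq_or_lt_of_le hS0 with h0 | hSpos
  · rw [← h0, mul_zero]; positivity
  have hp : 0 < (2 : ENNReal).toReal := by norm_num
  set g : ℕ → ℂ := fun k => (starRingEnd ℂ) (d k) with hg
  set f : lp (fun _ : ℕ => ℂ) 2 := ∑ k ∈ Finset.Icc m n, lp.single 2 k (g k) with hf
  have hfcoe : ∀ j, (f : ℕ → ℂ) j = if j ∈ Finset.Icc m n then g j else 0 := by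
    intro j
    rw [hf, lp.coeFn_sum, Finset.sum_apply]
    simp [lp.single_apply, eq_comm]
  -- norm of f
  have hfn : ‖f‖ ^ (2 : ℝ) = S := by
    rw [hf]
    have := lp.norm_sum_single (E := fun _ : ℕ => ℂ) hp g (Finset.Icc m n)
    simp only [ENNReal.toReal_ofNat] at this
    rw [this, hS]
    refine Finset.sum_congr rfl fun k _ => ?_
    rw [Real.rpow_two]
    simp [hg]
  -- Tf at j < m
  have hTf : ∀ j, j < m → (T f : ℕ → ℂ) j = (S : ℂ) := by
    intro j hj
    rw [hT]
    rw [tsum_eq_sum (s := Finset.Icc m n) (by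
      intro k hk
      rw [hfcoe, if_neg hk, mul_zero])]
    rw [hS]
    push_cast
    refine Finset.sum_congr rfl fun k hk => ?_
    have hjk : j < k := lt_of_lt_of_le hj (Finset.mem_Icc.mp hk).1
    rw [hfcoe, if_pos hk, if_neg hjk.ne, if_pos hjk]
    simp only [hg, hd]
    rw [Complex.mul_conj, Complex.normSq_eq_norm_sq]
    norm_cast
  -- lower bound on ‖Tf‖
  have hsum := lp.hasSum_norm hp (T f)
  simp only [ENNReal.toReal_ofNat] at hsum
  have hlow : (m : ℝ) * S ^ 2 ≤ ‖T f‖ ^ (2 : ℝ) := by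
    have h1 : ∑ j ∈ Finset.range m, ‖(T f : ℕ → ℂ) j‖ ^ (2 : ℝ) ≤ ‖T f‖ ^ (2 : ℝ) :=
      sum_le_hasSum _ (fun j _ => by positivity) hsum
    refine le_trans (le_of_eq ?_) h1
    have hSn : ‖(S : ℂ)‖ = S := by rw [Complex.norm_real]; exact Real.norm_of_nonneg hS0
    rw [Finset.sum_congr rfl fun j hj => by
      rw [hTf j (Finset.mem_range.mp hj), hSn],
      Finset.sum_const, Finset.card_range, nsmul_eq_mul]
    try rw [Real.rpow_two]
  -- upper bound
  have hub : ‖T f‖ ^ (2:ℝ) ≤ ‖T‖ ^ 2 * S := by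
    have h2 : ‖T f‖ ≤ ‖T‖ * ‖f‖ := T.le_opNorm f
    calc ‖T f‖ ^ (2:ℝ) = ‖T f‖ ^ 2 := by rw [Real.rpow_two]
      _ ≤ (‖T‖ * ‖f‖) ^ 2 := pow_le_pow_left₀ (norm_nonneg _) h2 2
      _ = ‖T‖ ^ 2 * ‖f‖ ^ 2 := by ring
      _ = ‖T‖ ^ 2 * S := by rw [← hfn, Real.rpow_two]
  have := hlow.trans hub
  have hmul : (m : ℝ) * S * S ≤ ‖T‖ ^ 2 * S := by
    calc (m:ℝ) * S * S = (m:ℝ) * S ^ 2 := by ring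
      _ ≤ _ := this
  exact le_of_mul_le_mul_right hmul hSpos
end

section
/- Combining the two bounds: if h_n(z) = Σ_{k=0}^n (1−k/(n+1))^{1/2} z^k and T_{h_n} is the associated upper-triangular matrix built from the coefficients c_k = (1−k/(n+1))^{1/2}, then ‖T_{h_n} : ℓ² → ℓ²‖² ≥ (1/8) log((n+1)/2), so ‖T_{h_n}‖ → ∞ as n → ∞. -/
open scoped BigOperators
open Filter


lemma aux_sqrt_diff (a : ℝ) (ha : 0 ≤ a) :
    1 / (4 * (a + 1)) ≤ (Real.sqrt (a + 1) - Real.sqrt a) ^ 2 := by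
  set u := Real.sqrt (a + 1) with hu'
  set v := Real.sqrt a with hv'
  have hu : u ^ 2 = a + 1 := Real.sq_sqrt (by linarith)
  have hv : v ^ 2 = a := Real.sq_sqrt ha
  have huv : v ≤ u := Real.sqrt_le_sqrt (by linarith)
  have hv0 : 0 ≤ v := Real.sqrt_nonneg a
  have hu0 : 0 ≤ u := Real.sqrt_nonneg _
  rw [div_le_iff₀ (by linarith)]
  have key : (u - v) * (u + v) = 1 := by nlinarith
  nlinarith [sq_nonneg (u - v), mul_nonneg (mul_nonneg (mul_nonneg (sub_nonneg.2 huv) (sub_nonneg.2 huv)) (sub_nonneg.2 huv)) (by linarith : (0:ℝ) ≤ 3*u + v)]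

lemma aux_harmonic (N : ℕ) : Real.log (N + 1) ≤ ∑ i ∈ Finset.Icc 1 N, (i : ℝ)⁻¹ := by
  have h := log_add_one_le_harmonic N
  rw [harmonic_eq_sum_Icc] at h
  push_cast at h ⊢
  convert h using 2

lemma main_bound (T : ℕ → (lp (fun _ : ℕ => ℂ) 2 →L[ℂ] lp (fun _ : ℕ => ℂ) 2))
    (c : ℕ → ℕ → ℂ)
    (hc : ∀ n k : ℕ, c n k =
      if k ≤ n then (((1 - (k : ℝ) / ((n : ℝ) + 1)) ^ ((1 : ℝ) / 2) : ℝ) : ℂ) else 0)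
    (hT : ∀ n : ℕ, 1 ≤ n → ∀ (f : lp (fun _ : ℕ => ℂ) 2) (j : ℕ),
      (T n f : ℕ → ℂ) j = ∑' k : ℕ,
        (if j = k then c n (k + 1)
          else if j < k then c n (k + 1) - c n k
          else 0) * (f : ℕ → ℂ) k)
    (n : ℕ) (hn : 1 ≤ n) :
    (1 / 8) * Real.log (((n : ℝ) + 1) / 2) ≤ ‖T n‖ ^ 2 := by
  have hn1 : (0:ℝ) < (n:ℝ) + 1 := by positivity
  set m : ℕ := n / 2 + 1 with hm
  have hm1 : 1 ≤ m := by omega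
  have hmn : m ≤ n := by omega
  have h2m : n + 1 ≤ 2 * m := by omega
  -- real coefficients
  set cr : ℕ → ℝ := fun k => Real.sqrt (((n:ℝ) + 1 - k) / ((n:ℝ) + 1)) with hcr
  have hcrc : ∀ k, c n k = ((cr k : ℝ) : ℂ) := by
    intro k
    rw [hc n k]
    split_ifs with h
    · have harg : (1 - (k:ℝ) / ((n:ℝ) + 1)) = ((n:ℝ) + 1 - k) / ((n:ℝ) + 1) := by
        field_simp
      have : cr k = (1 - (k:ℝ) / ((n:ℝ) + 1)) ^ ((1:ℝ)/2) := by
        rw [hcr]; simp only []; rw [harg, Real.sqrt_eq_rpow]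
      rw [this]
    · have : cr k = 0 := by
        apply Real.sqrt_eq_zero_of_nonpos
        have : ((n:ℝ) + 1 : ℝ) ≤ (k:ℝ) := by exact_mod_cast by omega
        apply div_nonpos_of_nonpos_of_nonneg <;> linarith
      rw [this]; norm_num
  -- differences
  set d : ℕ → ℝ := fun k => cr k - cr (k + 1) with hd
  have hcr_nonneg : ∀ k, 0 ≤ cr k := fun k => Real.sqrt_nonneg _
  have hd_nonneg : ∀ k, 0 ≤ d k := by
    intro k
    have : cr (k+1) ≤ cr k := by
      apply Real.sqrt_le_sqrt
      apply (div_le_div_iff_of_pos_right hn1).2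
      push_cast; linarith
    simpa [hd] using sub_nonneg.2 this
  set S : ℝ := ∑ k ∈ Finset.Icc m n, (d k) ^ 2 with hS
  have hS_nonneg : 0 ≤ S := Finset.sum_nonneg fun k _ => sq_nonneg _
  -- the test vector
  set g : lp (fun _ : ℕ => ℂ) 2 := ∑ k ∈ Finset.Icc m n, lp.single 2 k ((d k : ℂ)) with hg
  have hgcoe : ∀ j, (g : ℕ → ℂ) j = if j ∈ Finset.Icc m n then (d j : ℂ) else 0 := by
    intro j
    rw [hg]
    simp only [lp.coeFn_sum, lp.single_apply, Finset.sum_apply, Finset.sum_dite_eq, Pi.single_apply, Finset.sum_ite_eq]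
  have hgnorm : ‖g‖ ^ 2 = S := by
    have h2 : (0:ℝ) < (2 : ENNReal).toReal := by norm_num
    have := lp.norm_sum_single h2 (fun k => ((d k : ℝ) : ℂ)) (Finset.Icc m n)
    rw [show ((2 : ENNReal)).toReal = ((2:ℕ):ℝ) by norm_num] at this
    simp only [Real.rpow_natCast] at this
    rw [← hg] at this
    rw [this, hS]
    refine Finset.sum_congr rfl fun k _ => ?_
    rw [show ‖((d k : ℝ) : ℂ)‖ = |d k| by rw [Complex.norm_real, Real.norm_eq_abs], sq_abs]
  -- action of T on g
  have hTg : ∀ j, j < m → ((T n) g : ℕ → ℂ) j = -(S : ℂ) := by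
    intro j hj
    rw [hT n hn g j]
    have hzero : ∀ k ∉ Finset.Icc m n,
        (if j = k then c n (k + 1) else if j < k then c n (k + 1) - c n k else 0)
          * (g : ℕ → ℂ) k = 0 := by
      intro k hk
      rw [hgcoe k, if_neg hk, mul_zero]
    rw [tsum_eq_sum hzero]
    have hterm : ∀ k ∈ Finset.Icc m n,
        (if j = k then c n (k + 1) else if j < k then c n (k + 1) - c n k else 0)
          * (g : ℕ → ℂ) k = -(((d k) ^ 2 : ℝ) : ℂ) := by
      intro k hk
      have hk' := Finset.mem_Icc.1 hk
      have hjk : j < k := lt_of_lt_of_le hj hk'.1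
      rw [if_neg hjk.ne, if_pos hjk, hgcoe k, if_pos hk, hcrc, hcrc]
      have hdk : d k = cr k - cr (k + 1) := by rw [hd]
      rw [show ((d k ^ 2 : ℝ) : ℂ) = ((d k : ℝ) : ℂ) ^ 2 by push_cast; ring, hdk]
      push_cast
      ring
    rw [Finset.sum_congr rfl hterm, hS]
    push_cast
    rw [← Finset.sum_neg_distrib]
  -- lower bound on ‖T g‖
  have hTgnorm : (m : ℝ) * S ^ 2 ≤ ‖(T n) g‖ ^ 2 := by
    have h2 : (0:ℝ) < (2 : ENNReal).toReal := by norm_num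
    have hle := lp.sum_rpow_le_norm_rpow h2 ((T n) g) (Finset.range m)
    rw [show ((2 : ENNReal)).toReal = ((2:ℕ):ℝ) by norm_num] at hle
    simp only [Real.rpow_natCast] at hle
    have heach : ∀ j ∈ Finset.range m, ‖((T n) g : ℕ → ℂ) j‖ ^ 2 = S ^ 2 := by
      intro j hj
      rw [hTg j (Finset.mem_range.1 hj), norm_neg,
        show ‖((S : ℝ) : ℂ)‖ = |S| by rw [Complex.norm_real, Real.norm_eq_abs], abs_of_nonneg hS_nonneg]
    rw [Finset.sum_congr rfl heach, Finset.sum_const, Finset.card_range, nsmul_eq_mul] at hle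
    exact hle
  have hopp : ‖(T n) g‖ ^ 2 ≤ ‖T n‖ ^ 2 * S := by
    calc ‖(T n) g‖ ^ 2 ≤ (‖T n‖ * ‖g‖) ^ 2 :=
          pow_le_pow_left₀ (norm_nonneg _) ((T n).le_opNorm g) 2
      _ = ‖T n‖ ^ 2 * ‖g‖ ^ 2 := by ring
      _ = ‖T n‖ ^ 2 * S := by rw [hgnorm]
  -- lower bound on S
  have hterm2 : ∀ k ∈ Finset.Icc m n,
      1 / (4 * ((n:ℝ) + 1 - k) * ((n:ℝ) + 1)) ≤ d k ^ 2 := by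
    intro k hk
    have hk' := Finset.mem_Icc.1 hk
    have hkn : (k:ℝ) ≤ n := by exact_mod_cast hk'.2
    have ha : (0:ℝ) ≤ (n:ℝ) - k := by linarith
    have h1 : cr k = Real.sqrt (((n:ℝ) - k) + 1) / Real.sqrt ((n:ℝ) + 1) := by
      rw [hcr]
      simp only []
      rw [show (n:ℝ) + 1 - (k:ℝ) = ((n:ℝ) - k) + 1 by ring,
        Real.sqrt_div (by linarith)]
    have h2 : cr (k + 1) = Real.sqrt ((n:ℝ) - k) / Real.sqrt ((n:ℝ) + 1) := by
      rw [hcr]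
      simp only []
      push_cast
      rw [show (n:ℝ) + 1 - ((k:ℝ) + 1) = (n:ℝ) - k by ring, Real.sqrt_div ha]
    have hdk : d k = (Real.sqrt (((n:ℝ) - k) + 1) - Real.sqrt ((n:ℝ) - k))
        / Real.sqrt ((n:ℝ) + 1) := by
      rw [hd]; simp only []
      rw [h1, h2]; ring
    have hsq : d k ^ 2 = (Real.sqrt (((n:ℝ) - k) + 1) - Real.sqrt ((n:ℝ) - k)) ^ 2
        / ((n:ℝ) + 1) := by
      rw [hdk, div_pow, Real.sq_sqrt hn1.le]
    rw [hsq]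
    have hkey := aux_sqrt_diff ((n:ℝ) - k) ha
    rw [show (4 : ℝ) * ((n:ℝ) + 1 - k) * ((n:ℝ) + 1)
        = (4 * (((n:ℝ) - k) + 1)) * ((n:ℝ) + 1) by ring, ← div_div]
    gcongr
  have hSsum : ∑ k ∈ Finset.Icc m n, 1 / (4 * ((n:ℝ) + 1 - k) * ((n:ℝ) + 1)) ≤ S := by
    rw [hS]; exact Finset.sum_le_sum hterm2
  set N : ℕ := n + 1 - m with hN
  have hN1 : 1 ≤ N := by omega
  have hNsum : ∑ k ∈ Finset.Icc m n, (1:ℝ) / ((n:ℝ) + 1 - k)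
      = ∑ i ∈ Finset.Icc 1 N, (i:ℝ)⁻¹ := by
    apply Finset.sum_nbij' (fun k => n + 1 - k) (fun i => n + 1 - i)
    · intro a ha; have := Finset.mem_Icc.1 ha; rw [Finset.mem_Icc]; omega
    · intro a ha; have := Finset.mem_Icc.1 ha; rw [Finset.mem_Icc]; omega
    · intro a ha; have := Finset.mem_Icc.1 ha; omega
    · intro a ha; have := Finset.mem_Icc.1 ha; omega
    · intro a ha
      have ha' := Finset.mem_Icc.1 ha
      rw [one_div]
      congr 1
      have : ((n + 1 - a : ℕ) : ℝ) = (n:ℝ) + 1 - a := by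
        have : a ≤ n + 1 := by omega
        push_cast [Nat.cast_sub this]
        ring
      rw [this]
  have hSlow : (1 / (4 * ((n:ℝ) + 1))) * Real.log ((N:ℝ) + 1) ≤ S := by
    have hfac : ∀ k ∈ Finset.Icc m n,
        (1 / (4 * ((n:ℝ) + 1))) * ((1:ℝ) / ((n:ℝ) + 1 - k))
          = 1 / (4 * ((n:ℝ) + 1 - k) * ((n:ℝ) + 1)) := by
      intro k hk
      have hk' := Finset.mem_Icc.1 hk
      have hkpos : (0:ℝ) < (n:ℝ) + 1 - k := by
        have : (k:ℝ) ≤ n := by exact_mod_cast hk'.2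
        linarith
      rw [div_mul_div_comm, one_mul, one_div, one_div]
      congr 1
      ring
    have hlogN : Real.log ((N:ℝ) + 1) ≤ ∑ i ∈ Finset.Icc 1 N, (i:ℝ)⁻¹ := by
      have := aux_harmonic N
      exact this
    calc (1 / (4 * ((n:ℝ) + 1))) * Real.log ((N:ℝ) + 1)
        ≤ (1 / (4 * ((n:ℝ) + 1))) * ∑ i ∈ Finset.Icc 1 N, (i:ℝ)⁻¹ :=
          mul_le_mul_of_nonneg_left hlogN (by positivity)
      _ = ∑ k ∈ Finset.Icc m n, (1 / (4 * ((n:ℝ) + 1))) * ((1:ℝ) / ((n:ℝ) + 1 - k)) := by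
          rw [← hNsum, Finset.mul_sum]
      _ = ∑ k ∈ Finset.Icc m n, 1 / (4 * ((n:ℝ) + 1 - k) * ((n:ℝ) + 1)) :=
          Finset.sum_congr rfl hfac
      _ ≤ S := hSsum
  have hSpos : 0 < S := by
    have hlogpos : 0 < Real.log ((N:ℝ) + 1) := by
      apply Real.log_pos
      have : (1:ℝ) ≤ (N:ℝ) := by exact_mod_cast hN1
      linarith
    have : 0 < (1 / (4 * ((n:ℝ) + 1))) * Real.log ((N:ℝ) + 1) := by positivity
    linarith
  have hmS : (m:ℝ) * S ≤ ‖T n‖ ^ 2 := by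
    have h := le_trans hTgnorm hopp
    have h' : ((m:ℝ) * S) * S ≤ (‖T n‖ ^ 2) * S := by nlinarith
    exact le_of_mul_le_mul_right h' hSpos
  -- final arithmetic
  have hA : ((n:ℝ) + 1) ≤ 2 * (m:ℝ) := by exact_mod_cast h2m
  have hB : ((n:ℝ) + 1) / 2 ≤ (N:ℝ) + 1 := by
    have hB' : n + 1 ≤ 2 * (N + 1) := by omega
    have : ((n:ℝ) + 1) ≤ 2 * ((N:ℝ) + 1) := by exact_mod_cast hB'
    linarith
  have hL0 : 0 ≤ Real.log (((n:ℝ) + 1) / 2) := by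
    apply Real.log_nonneg
    have : (1:ℝ) ≤ (n:ℝ) := by exact_mod_cast hn
    linarith
  have hlog : Real.log (((n:ℝ) + 1) / 2) ≤ Real.log ((N:ℝ) + 1) :=
    Real.log_le_log (by positivity) hB
  calc (1/8) * Real.log (((n:ℝ) + 1) / 2)
      ≤ ((m:ℝ) / (4 * ((n:ℝ) + 1))) * Real.log (((n:ℝ) + 1) / 2) := by
        apply mul_le_mul_of_nonneg_right ?_ hL0
        rw [le_div_iff₀ (by positivity)]
        linarith
    _ ≤ ((m:ℝ) / (4 * ((n:ℝ) + 1))) * Real.log ((N:ℝ) + 1) :=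
        mul_le_mul_of_nonneg_left hlog (by positivity)
    _ = (m:ℝ) * ((1 / (4 * ((n:ℝ) + 1))) * Real.log ((N:ℝ) + 1)) := by ring
    _ ≤ (m:ℝ) * S := mul_le_mul_of_nonneg_left hSlow (by positivity)
    _ ≤ ‖T n‖ ^ 2 := hmS

lemma aux_sqrt_tendsto : Tendsto Real.sqrt atTop atTop := by
  refine tendsto_atTop_atTop.2 fun b => ⟨b ^ 2, fun a ha => ?_⟩
  calc b ≤ |b| := le_abs_self b
  _ = Real.sqrt (b ^ 2) := (Real.sqrt_sq_eq_abs b).symm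
  _ ≤ Real.sqrt a := Real.sqrt_le_sqrt ha

/-- For the coefficients c_k = (1 − k/(n+1))^{1/2} (for 1 ≤ k ≤ n, and 0 for k > n),
the associated upper-triangular matrices T_{h_n} on ℓ² (indices shifted so that Lean
index j corresponds to matrix index j+1 ≥ 1) satisfy ‖T_{h_n}‖² ≥ (1/8)·log((n+1)/2);
consequently ‖T_{h_n}‖ → ∞. -/
theorem stmt19 (T : ℕ → (lp (fun _ : ℕ => ℂ) 2 →L[ℂ] lp (fun _ : ℕ => ℂ) 2))
    (c : ℕ → ℕ → ℂ)
    (hc : ∀ n k : ℕ, c n k =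
      if k ≤ n then (((1 - (k : ℝ) / ((n : ℝ) + 1)) ^ ((1 : ℝ) / 2) : ℝ) : ℂ) else 0)
    (hT : ∀ n : ℕ, 1 ≤ n → ∀ (f : lp (fun _ : ℕ => ℂ) 2) (j : ℕ),
      (T n f : ℕ → ℂ) j = ∑' k : ℕ,
        (if j = k then c n (k + 1)
          else if j < k then c n (k + 1) - c n k
          else 0) * (f : ℕ → ℂ) k) :
    (∀ n : ℕ, 1 ≤ n → (1 / 8) * Real.log (((n : ℝ) + 1) / 2) ≤ ‖T n‖ ^ 2) ∧
    Tendsto (fun n => ‖T n‖) atTop atTop := by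
  have h1 : ∀ n : ℕ, 1 ≤ n → (1 / 8) * Real.log (((n : ℝ) + 1) / 2) ≤ ‖T n‖ ^ 2 :=
    fun n hn => main_bound T c hc hT n hn
  refine ⟨h1, ?_⟩
  have hsqrt : Tendsto (fun n : ℕ => Real.sqrt ((1/8) * Real.log (((n:ℝ) + 1) / 2)))
      atTop atTop := by
    apply aux_sqrt_tendsto.comp
    apply Tendsto.const_mul_atTop (by norm_num : (0:ℝ) < 1/8)
    apply Real.tendsto_log_atTop.comp
    apply Tendsto.atTop_div_const (by norm_num : (0:ℝ) < 2)
    exact tendsto_atTop_add_const_right _ 1 tendsto_natCast_atTop_atTop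
  apply tendsto_atTop_mono' atTop ?_ hsqrt
  filter_upwards [eventually_ge_atTop 1] with n hn
  calc Real.sqrt ((1/8) * Real.log (((n:ℝ) + 1) / 2))
      ≤ Real.sqrt (‖T n‖ ^ 2) := Real.sqrt_le_sqrt (h1 n hn)
    _ = ‖T n‖ := Real.sqrt_sq (norm_nonneg _)
end
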